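/- If 0 < |B| < |B|_c and |ξ| > |ξ|_{vc}^B, then there exists s₀ > 0 (depending only on ρ₊, ρ₋, μ₊, μ₋, g, |B|, |ξ|) such that α(s) < 0 for every s with 0 < s ≤ s₀. -/

import Mathlib

open MeasureTheory Set Filter Topology

noncomputable section

/-- The set of Rayleigh quotients defining the critical magnetic number `|B|_c`. -/
def BcSet (g ρp ρm : ℝ) : Set ℝ :=
  {r | ∃ φ : ℝ → ℝ, (∃ K, LipschitzWith K φ) ∧ φ (-1) = 0 ∧ φ 1 = 0 ∧
    ¬ (∀ᵐ y ∂(volume.restrict (Icc (-1:ℝ) 1)), φ y = 0) ∧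
    r = g * (ρp - ρm) * (φ 0) ^ 2 / ∫ y in (-1:ℝ)..1, (deriv φ y) ^ 2}

/-- The set of quotients defining the vertical critical frequency `|ξ|_{vc}^B`. -/
def XivcSet (g ρp ρm B : ℝ) : Set ℝ :=
  {r | ∃ φ : ℝ → ℝ, ContDiff ℝ 2 φ ∧ φ (-1) = 0 ∧ φ 1 = 0 ∧
    deriv φ (-1) = 0 ∧ deriv φ 1 = 0 ∧
    0 < g * (ρp - ρm) * (φ 0) ^ 2 - B ^ 2 * ∫ y in (-1:ℝ)..1, (deriv φ y) ^ 2 ∧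
    r = (B ^ 2 * ∫ y in (-1:ℝ)..1, (deriv (deriv φ) y) ^ 2) /
        (g * (ρp - ρm) * (φ 0) ^ 2 - B ^ 2 * ∫ y in (-1:ℝ)..1, (deriv φ y) ^ 2)}

/-- The set of quotients defining the horizontal critical frequency `|ξ|_{hc}^B`. -/
def XihcSet (g ρp ρm B : ℝ) : Set ℝ :=
  {r | ∃ φ : ℝ → ℝ, (∃ K, LipschitzWith K φ) ∧ φ (-1) = 0 ∧ φ 1 = 0 ∧
    ¬ (∀ᵐ y ∂(volume.restrict (Icc (-1:ℝ) 1)), φ y = 0) ∧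
    r = (g * (ρp - ρm) * (φ 0) ^ 2 - B ^ 2 * ∫ y in (-1:ℝ)..1, (deriv φ y) ^ 2) /
        (B ^ 2 * ∫ y in (-1:ℝ)..1, (φ y) ^ 2)}

/-- The magnetic part `E₀` of the energy of the vertical problem. -/
def E0 (g ρp ρm B ξ : ℝ) (ψ : ℝ → ℝ) : ℝ :=
  (1/2) * (∫ y in (-1:ℝ)..1, B ^ 2 * ((deriv ψ y) ^ 2 + (deriv (deriv ψ) y) ^ 2 / ξ ^ 2)) -
    (1/2) * (g * (ρp - ρm)) * (ψ 0) ^ 2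

/-- The viscous part `E₁` of the energy, with piecewise viscosity `μ₊` above, `μ₋` below. -/
def E1 (μp μm ξ : ℝ) (ψ : ℝ → ℝ) : ℝ :=
  (1/2) * ∫ y in (-1:ℝ)..1,
    (if 0 < y then μp else μm) *
      (4 * ξ ^ 2 * (deriv ψ y) ^ 2 + (ξ ^ 2 * ψ y + deriv (deriv ψ) y) ^ 2)

/-- The normalization functional `J`, with piecewise density `ρ₊` above, `ρ₋` below. -/
def Jfun (ρp ρm ξ : ℝ) (ψ : ℝ → ℝ) : ℝ :=
  (1/2) * ∫ y in (-1:ℝ)..1,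
    (if 0 < y then ρp else ρm) * (ξ ^ 2 * (ψ y) ^ 2 + (deriv ψ y) ^ 2)

/-- `ψ` is an admissible test function: `C²` with vanishing boundary values of `ψ` and `ψ'`. -/
def Adm (ψ : ℝ → ℝ) : Prop :=
  ContDiff ℝ 2 ψ ∧ ψ (-1) = 0 ∧ ψ 1 = 0 ∧ deriv ψ (-1) = 0 ∧ deriv ψ 1 = 0

/-- `α(s)`: the infimum of the modified energy `E(ψ;s) = ξ²E₀(ψ) + sE₁(ψ)` over admissible
`ψ` normalized by `J(ψ) = 1`. -/
def alpha (ρp ρm μp μm g B ξ s : ℝ) : ℝ :=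
  sInf {r : ℝ | ∃ ψ : ℝ → ℝ, Adm ψ ∧ Jfun ρp ρm ξ ψ = 1 ∧
    r = ξ ^ 2 * E0 g ρp ρm B ξ ψ + s * E1 μp μm ξ ψ}


lemma lip_deriv_abs_le {f : ℝ → ℝ} {K : NNReal} (hf : LipschitzWith K f) (x : ℝ) :
    |deriv f x| ≤ K := by
  by_cases h : DifferentiableAt ℝ f x
  · have h1 : HasFDerivAt f (fderiv ℝ f x) x := h.hasFDerivAt
    have h2 : ‖fderiv ℝ f x‖ ≤ K := h1.le_of_lipschitz hf
    have h3 : deriv f x = fderiv ℝ f x 1 := by rw [fderiv_apply_one_eq_deriv]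
    calc |deriv f x| = ‖fderiv ℝ f x 1‖ := by rw [h3, Real.norm_eq_abs]
    _ ≤ ‖fderiv ℝ f x‖ * ‖(1:ℝ)‖ := (fderiv ℝ f x).le_opNorm 1
    _ ≤ K := by simpa using h2
  · rw [deriv_zero_of_not_differentiableAt h]
    simpa using K.coe_nonneg

lemma lip_deriv_intervalIntegrable {f : ℝ → ℝ} {K : NNReal} (hf : LipschitzWith K f) (a b : ℝ) :
    IntervalIntegrable (deriv f) volume a b := by
  refine (intervalIntegrable_const (c := (K:ℝ))).mono_fun
    (measurable_deriv f).aestronglyMeasurable ?_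
  filter_upwards with x
  simpa [Real.norm_eq_abs, abs_of_nonneg K.coe_nonneg] using lip_deriv_abs_le hf x

lemma lip_deriv_sq_intervalIntegrable {f : ℝ → ℝ} {K : NNReal} (hf : LipschitzWith K f) (a b : ℝ) :
    IntervalIntegrable (fun x => (deriv f x) ^ 2) volume a b := by
  refine (intervalIntegrable_const (c := ((K:ℝ))^2)).mono_fun
    (((measurable_deriv f).pow_const 2).aestronglyMeasurable) ?_
  filter_upwards with x
  have := lip_deriv_abs_le hf x
  have h2 : |deriv f x| ^ 2 ≤ (K:ℝ)^2 := by
    exact pow_le_pow_left₀ (abs_nonneg _) this 2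
  simp only [Real.norm_eq_abs]
  rw [abs_of_nonneg (sq_nonneg _), abs_of_nonneg (by positivity : (0:ℝ) ≤ (K:ℝ)^2)]
  simpa [sq_abs] using h2

/-- Fundamental theorem of calculus for Lipschitz functions. -/
lemma lip_integral_deriv {f : ℝ → ℝ} {K : NNReal} (hf : LipschitzWith K f) (a b : ℝ) :
    ∫ x in a..b, deriv f x = f b - f a := by
  have hcont : Continuous f := hf.continuous
  set u : ℕ → ℝ := fun n => 1 / (n + 1) with hu_def
  have hu_pos : ∀ n, 0 < u n := fun n => by positivity
  have hu_lim : Tendsto u atTop (𝓝 0) := tendsto_one_div_add_atTop_nhds_zero_nat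
  -- slope convergence helper
  have slope_tendsto : ∀ (g : ℝ → ℝ) (c L : ℝ), HasDerivAt g L c →
      Tendsto (fun n : ℕ => (g (c + u n) - g c) / u n) atTop (𝓝 L) := by
    intro g c L hg
    have h1 := hasDerivAt_iff_tendsto_slope.1 hg
    have h2 : Tendsto (fun n : ℕ => c + u n) atTop (𝓝[≠] c) := by
      rw [tendsto_nhdsWithin_iff]
      constructor
      · simpa using tendsto_const_nhds.add hu_lim
      · filter_upwards with n
        simp only [mem_compl_iff, mem_singleton_iff]
        intro h
        have := hu_pos n
        nlinarith [add_left_cancel (a := c) (b := u n) (c := 0) (by linarith)]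
    have h3 := h1.comp h2
    convert h3 using 2 with n
    simp [slope_def_field, add_sub_cancel_left]
  have hint : ∀ c d : ℝ, IntervalIntegrable f volume c d := fun c d =>
    hcont.intervalIntegrable _ _
  -- step 1
  have key1 : ∀ n, (∫ x in a..b, (f (x + u n) - f x) / u n)
      = ((∫ x in b..b + u n, f x) - ∫ x in a..a + u n, f x) / u n := by
    intro n
    rw [intervalIntegral.integral_div]
    congr 1
    have hcomp : IntervalIntegrable (fun x => f (x + u n)) volume a b :=
      (hcont.comp (continuous_add_right (u n))).intervalIntegrable _ _
    rw [intervalIntegral.integral_sub hcomp (hint a b)]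
    have h2 : (∫ x in a..b, f (x + u n)) = ∫ x in a + u n..b + u n, f x :=
      intervalIntegral.integral_comp_add_right f (u n)
    have h3 : (∫ x in a..a + u n, f x) + (∫ x in a + u n..b + u n, f x)
        = ∫ x in a..b + u n, f x :=
      intervalIntegral.integral_add_adjacent_intervals (hint _ _) (hint _ _)
    have h4 : (∫ x in a..b, f x) + (∫ x in b..b + u n, f x) = ∫ x in a..b + u n, f x :=
      intervalIntegral.integral_add_adjacent_intervals (hint _ _) (hint _ _)
    linarith [h2]
  -- step 2 : limit of the RHS
  have lim2 : Tendsto (fun n => ((∫ x in b..b + u n, f x) - ∫ x in a..a + u n, f x) / u n)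
      atTop (𝓝 (f b - f a)) := by
    have hb : HasDerivAt (fun t => ∫ x in b..t, f x) (f b) b :=
      (hcont.integral_hasStrictDerivAt b b).hasDerivAt
    have ha : HasDerivAt (fun t => ∫ x in a..t, f x) (f a) a :=
      (hcont.integral_hasStrictDerivAt a a).hasDerivAt
    have hb' := slope_tendsto _ b (f b) hb
    have ha' := slope_tendsto _ a (f a) ha
    simp only [intervalIntegral.integral_same, sub_zero] at hb' ha'
    have := hb'.sub ha'
    simpa [sub_div] using this
  -- step 3 : dominated convergence
  have lim1 : Tendsto (fun n => ∫ x in a..b, (f (x + u n) - f x) / u n) atTop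
      (𝓝 (∫ x in a..b, deriv f x)) := by
    apply intervalIntegral.tendsto_integral_filter_of_dominated_convergence (fun _ => (K:ℝ))
    · filter_upwards with n
      exact (((hcont.comp (continuous_add_right (u n))).sub hcont).div_const _).aestronglyMeasurable.restrict
    · filter_upwards with n
      filter_upwards with x _
      have h1 : |f (x + u n) - f x| ≤ K * u n := by
        have := hf.dist_le_mul (x + u n) x
        rw [Real.dist_eq, Real.dist_eq] at this
        simpa [abs_of_pos (hu_pos n)] using this
      rw [Real.norm_eq_abs, abs_div, abs_of_pos (hu_pos n), div_le_iff₀ (hu_pos n)]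
      exact h1
    · exact intervalIntegrable_const
    · have hae := hf.ae_differentiableAt_real
      have : ∀ᵐ (x : ℝ), Tendsto (fun n => (f (x + u n) - f x) / u n) atTop (𝓝 (deriv f x)) := by
        filter_upwards [hae] with x hx
        exact slope_tendsto f x (deriv f x) hx.hasDerivAt
      filter_upwards [this] with x hx _
      exact hx
  simp only [key1] at lim1
  exact tendsto_nhds_unique lim1 lim2

lemma sq_integral_le {f : ℝ → ℝ} {a b : ℝ} (hab : b = a + 1)
    (hi : IntervalIntegrable f volume a b)
    (hi2 : IntervalIntegrable (fun x => (f x) ^ 2) volume a b) :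
    (∫ x in a..b, f x) ^ 2 ≤ ∫ x in a..b, (f x) ^ 2 := by
  set c := ∫ x in a..b, f x with hc
  have hab' : a ≤ b := by rw [hab]; linarith
  have h0 : 0 ≤ ∫ x in a..b, (f x - c) ^ 2 :=
    intervalIntegral.integral_nonneg hab' (fun x _ => sq_nonneg _)
  have hexp : (∫ x in a..b, (f x - c) ^ 2)
      = (∫ x in a..b, (f x) ^ 2) - 2 * c * c + c ^ 2 * (b - a) := by
    have heq : ∀ x, (f x - c) ^ 2 = (f x) ^ 2 - 2 * c * f x + c ^ 2 := fun x => by ring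
    simp_rw [heq]
    rw [intervalIntegral.integral_add (hi2.sub (hi.const_mul (2 * c))) intervalIntegrable_const,
      intervalIntegral.integral_sub hi2 (hi.const_mul (2 * c)),
      intervalIntegral.integral_const_mul, intervalIntegral.integral_const]
    rw [← hc]
    simp only [smul_eq_mul]
    ring
  have hba : b - a = 1 := by rw [hab]; ring
  rw [hexp, hba] at h0
  nlinarith [h0]

lemma bcset_le {g ρp ρm : ℝ} (hg : 0 < g) (hρ : ρm < ρp) :
    ∀ r ∈ BcSet g ρp ρm, r ≤ g * (ρp - ρm) / 2 := by
  rintro r ⟨φ, ⟨K, hK⟩, hm1, hp1, -, rfl⟩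
  set d := ∫ y in (-1:ℝ)..1, (deriv φ y) ^ 2 with hd_def
  have hi1 : IntervalIntegrable (deriv φ) volume (-1) 0 := lip_deriv_intervalIntegrable hK _ _
  have hi2 : IntervalIntegrable (fun x => (deriv φ x) ^ 2) volume (-1) 0 :=
    lip_deriv_sq_intervalIntegrable hK _ _
  have hi1' : IntervalIntegrable (deriv φ) volume 0 1 := lip_deriv_intervalIntegrable hK _ _
  have hi2' : IntervalIntegrable (fun x => (deriv φ x) ^ 2) volume 0 1 :=
    lip_deriv_sq_intervalIntegrable hK _ _
  have hL : (∫ y in (-1:ℝ)..0, deriv φ y) = φ 0 := by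
    rw [lip_integral_deriv hK, hm1, sub_zero]
  have hR : (∫ y in (0:ℝ)..1, deriv φ y) = -φ 0 := by
    rw [lip_integral_deriv hK, hp1, zero_sub]
  have h1 : (φ 0) ^ 2 ≤ ∫ y in (-1:ℝ)..0, (deriv φ y) ^ 2 := by
    have := sq_integral_le (a := -1) (b := 0) (by norm_num) hi1 hi2
    rwa [hL] at this
  have h2 : (φ 0) ^ 2 ≤ ∫ y in (0:ℝ)..1, (deriv φ y) ^ 2 := by
    have := sq_integral_le (a := 0) (b := 1) (by norm_num) hi1' hi2'
    rw [hR] at this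
    simpa [neg_sq] using this
  have hsplit : (∫ y in (-1:ℝ)..0, (deriv φ y) ^ 2) + (∫ y in (0:ℝ)..1, (deriv φ y) ^ 2) = d :=
    intervalIntegral.integral_add_adjacent_intervals hi2 hi2'
  have hdge : 2 * (φ 0) ^ 2 ≤ d := by linarith
  by_cases hd0 : d = 0
  · rw [hd0, div_zero]
    have h : 0 < ρp - ρm := by linarith
    positivity
  · have hdpos : 0 < d := lt_of_le_of_ne (by nlinarith [sq_nonneg (φ 0)]) (Ne.symm hd0)
    rw [div_le_div_iff₀ hdpos two_pos]
    nlinarith [mul_le_mul_of_nonneg_left hdge (by nlinarith : (0:ℝ) ≤ g * (ρp - ρm))]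


/-- Existence of a C² test function with positive "magnetic energy margin". -/
lemma exists_good_test {g ρp ρm B : ℝ} (hg : 0 < g) (hρ : ρm < ρp)
    (hB2 : B ^ 2 * 2 < g * (ρp - ρm)) :
    ∃ φ : ℝ → ℝ, ContDiff ℝ 2 φ ∧ φ (-1) = 0 ∧ φ 1 = 0 ∧
      deriv φ (-1) = 0 ∧ deriv φ 1 = 0 ∧
      0 < g * (ρp - ρm) * (φ 0) ^ 2 - B ^ 2 * ∫ y in (-1:ℝ)..1, (deriv φ y) ^ 2 := by
  set G := g * (ρp - ρm) with hG_def
  have hGpos : 0 < G := by nlinarith [sq_nonneg B]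
  set δ := G - B ^ 2 * 2 with hδ_def
  have hδpos : 0 < δ := by simp only [hδ_def]; linarith
  set ε := min (1/2 : ℝ) (δ / (8 * G)) with hε_def
  have hε_pos : 0 < ε := lt_min (by norm_num) (by positivity)
  have hε_half : ε ≤ 1/2 := min_le_left _ _
  have hε_lt : ε ≤ δ / (8 * G) := min_le_right _ _
  set T := Real.smoothTransition with hT_def
  set f₀ : ℝ → ℝ := fun y => T ((y + 1) / ε) * T (-y / ε) with hf₀_def
  set f : ℝ → ℝ := fun y => f₀ y - f₀ (-y) with hf_def
  have hf₀_smooth : ContDiff ℝ 1 f₀ := by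
    apply ContDiff.mul
    · exact Real.smoothTransition.contDiff.comp
        ((contDiff_id.add contDiff_const).div_const ε)
    · exact Real.smoothTransition.contDiff.comp (contDiff_neg.div_const ε)
  have hf_smooth : ContDiff ℝ 1 f := hf₀_smooth.sub (hf₀_smooth.comp contDiff_neg)
  have hf_cont : Continuous f := hf_smooth.continuous
  have hf₀_cont : Continuous f₀ := hf₀_smooth.continuous
  have hf₀_nonneg : ∀ y, 0 ≤ f₀ y := fun y =>
    mul_nonneg (Real.smoothTransition.nonneg _) (Real.smoothTransition.nonneg _)
  have hf₀_le_one : ∀ y, f₀ y ≤ 1 := fun y =>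
    mul_le_one₀ (Real.smoothTransition.le_one _) (Real.smoothTransition.nonneg _)
      (Real.smoothTransition.le_one _)
  have hf₀_right : ∀ y : ℝ, 0 ≤ y → f₀ y = 0 := by
    intro y hy
    have : T (-y / ε) = 0 := Real.smoothTransition.zero_of_nonpos
      (div_nonpos_of_nonpos_of_nonneg (by linarith) hε_pos.le)
    simp [hf₀_def, this]
  have hf₀_one : ∀ y : ℝ, -1 + ε ≤ y → y ≤ -ε → f₀ y = 1 := by
    intro y h1 h2
    have hA : T ((y + 1) / ε) = 1 := Real.smoothTransition.one_of_one_le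
      ((le_div_iff₀ hε_pos).2 (by linarith))
    have hB' : T (-y / ε) = 1 := Real.smoothTransition.one_of_one_le
      ((le_div_iff₀ hε_pos).2 (by linarith))
    simp [hf₀_def, hA, hB']
  set φ : ℝ → ℝ := fun y => ∫ t in (-1:ℝ)..y, f t with hφ_def
  have hφ_hasDeriv : ∀ y, HasDerivAt φ (f y) y := fun y =>
    (hf_cont.integral_hasStrictDerivAt (-1) y).hasDerivAt
  have hφ_deriv : deriv φ = f := funext fun y => (hφ_hasDeriv y).deriv
  have hφ_diff : Differentiable ℝ φ := fun y => (hφ_hasDeriv y).differentiableAt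
  have hφ_C2 : ContDiff ℝ 2 φ := by
    rw [show (2 : WithTop ℕ∞) = 1 + 1 from rfl, contDiff_succ_iff_deriv]
    refine ⟨hφ_diff, by simp, ?_⟩
    rw [hφ_deriv]; exact hf_smooth
  have hφm1 : φ (-1) = 0 := intervalIntegral.integral_same
  have hfint : ∀ c d : ℝ, IntervalIntegrable f volume c d := fun c d =>
    hf_cont.intervalIntegrable _ _
  have hf₀int : ∀ c d : ℝ, IntervalIntegrable f₀ volume c d := fun c d =>
    hf₀_cont.intervalIntegrable _ _
  have hφ1 : φ 1 = 0 := by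
    have hneg : (∫ t in (-1:ℝ)..1, f₀ (-t)) = ∫ t in (-1:ℝ)..1, f₀ t := by
      rw [intervalIntegral.integral_comp_neg]
      norm_num
    have : φ 1 = (∫ t in (-1:ℝ)..1, f₀ t) - ∫ t in (-1:ℝ)..1, f₀ (-t) := by
      rw [hφ_def]
      exact intervalIntegral.integral_sub (hf₀int _ _)
        ((hf₀_cont.comp continuous_neg).intervalIntegrable _ _)
    rw [this, hneg, sub_self]
  have hf0m1 : f₀ (-1) = 0 := by
    have he : ((-1:ℝ) + 1) / ε = 0 := by norm_num
    show T (((-1:ℝ) + 1) / ε) * T (-(-1:ℝ) / ε) = 0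
    rw [he, hT_def, Real.smoothTransition.zero, zero_mul]
  have hf0p1 : f₀ (1:ℝ) = 0 := hf₀_right _ (by norm_num)
  have hfm1 : f (-1) = 0 := by
    show f₀ (-1) - f₀ (-(-1)) = 0
    rw [neg_neg, hf0m1, hf0p1, sub_zero]
  have hfp1 : f 1 = 0 := by
    show f₀ 1 - f₀ (-(1:ℝ)) = 0
    rw [hf0m1, hf0p1, sub_zero]
  have hdm1 : deriv φ (-1) = 0 := by rw [hφ_deriv]; exact hfm1
  have hdp1 : deriv φ 1 = 0 := by rw [hφ_deriv]; exact hfp1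
  -- φ 0 ≥ 1 - 2ε
  have hφ0_eq : φ 0 = ∫ t in (-1:ℝ)..0, f₀ t := by
    rw [hφ_def]
    apply intervalIntegral.integral_congr
    intro t ht
    rw [uIcc_of_le (by norm_num : (-1:ℝ) ≤ 0)] at ht
    have : f₀ (-t) = 0 := hf₀_right _ (by linarith [ht.2])
    simp [hf_def, this]
  have hφ0_ge : 1 - 2 * ε ≤ φ 0 := by
    have hle1 : (-1 : ℝ) ≤ -1 + ε := by linarith
    have hle2 : (-1 + ε : ℝ) ≤ -ε := by linarith
    have hle3 : (-ε : ℝ) ≤ 0 := by linarith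
    have hsp1 : (∫ t in (-1:ℝ)..(-1+ε), f₀ t) + (∫ t in (-1+ε:ℝ)..(-ε), f₀ t)
        = ∫ t in (-1:ℝ)..(-ε), f₀ t :=
      intervalIntegral.integral_add_adjacent_intervals (hf₀int _ _) (hf₀int _ _)
    have hsp2 : (∫ t in (-1:ℝ)..(-ε), f₀ t) + (∫ t in (-ε:ℝ)..0, f₀ t)
        = ∫ t in (-1:ℝ)..0, f₀ t :=
      intervalIntegral.integral_add_adjacent_intervals (hf₀int _ _) (hf₀int _ _)
    have h1 : 0 ≤ ∫ t in (-1:ℝ)..(-1+ε), f₀ t :=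
      intervalIntegral.integral_nonneg hle1 (fun x _ => hf₀_nonneg x)
    have h3 : 0 ≤ ∫ t in (-ε:ℝ)..0, f₀ t :=
      intervalIntegral.integral_nonneg hle3 (fun x _ => hf₀_nonneg x)
    have h2 : (∫ t in (-1+ε:ℝ)..(-ε), f₀ t) = 1 - 2 * ε := by
      have : (∫ t in (-1+ε:ℝ)..(-ε), f₀ t) = ∫ _t in (-1+ε:ℝ)..(-ε), (1:ℝ) := by
        apply intervalIntegral.integral_congr
        intro t ht
        rw [uIcc_of_le hle2] at ht
        exact hf₀_one t ht.1 ht.2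
      rw [this, intervalIntegral.integral_const, smul_eq_mul]
      ring
    rw [hφ0_eq, ← hsp2, ← hsp1, h2]
    linarith
  -- ∫ f² ≤ 2
  have hfsq_le : (∫ y in (-1:ℝ)..1, (f y) ^ 2) ≤ 2 := by
    have hmono : (∫ y in (-1:ℝ)..1, (f y) ^ 2) ≤ ∫ _y in (-1:ℝ)..1, (1:ℝ) := by
      apply intervalIntegral.integral_mono_on (by norm_num)
        ((hf_cont.pow 2).intervalIntegrable _ _) intervalIntegrable_const
      intro x _
      have h1 : |f x| ≤ 1 := by
        have := hf₀_nonneg x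
        have := hf₀_le_one x
        have := hf₀_nonneg (-x)
        have := hf₀_le_one (-x)
        rw [hf_def, abs_le]
        constructor <;> simp <;> linarith
      calc (f x) ^ 2 = |f x| ^ 2 := (sq_abs _).symm
      _ ≤ 1 ^ 2 := pow_le_pow_left₀ (abs_nonneg _) h1 2
      _ = 1 := one_pow 2
    rw [intervalIntegral.integral_const, smul_eq_mul] at hmono
    linarith
  refine ⟨φ, hφ_C2, hφm1, hφ1, hdm1, hdp1, ?_⟩
  rw [hφ_deriv]
  have hφ0_nonneg : 0 ≤ 1 - 2 * ε := by linarith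
  have hsq : (1 - 2*ε) ^ 2 ≤ (φ 0) ^ 2 := pow_le_pow_left₀ hφ0_nonneg hφ0_ge 2
  have hB2nn : 0 ≤ B ^ 2 := sq_nonneg B
  have hkey : G * (1 - 2*ε) ^ 2 > B ^ 2 * 2 := by
    have h8 : ε * (8 * G) ≤ δ := (le_div_iff₀ (by positivity)).1 hε_lt
    nlinarith [sq_nonneg ε, mul_pos hGpos hε_pos]
  have hBf : B ^ 2 * (∫ y in (-1:ℝ)..1, (f y) ^ 2) ≤ B ^ 2 * 2 :=
    mul_le_mul_of_nonneg_left hfsq_le hB2nn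
  have hGφ : G * (1 - 2*ε) ^ 2 ≤ G * (φ 0) ^ 2 := mul_le_mul_of_nonneg_left hsq hGpos.le
  linarith


lemma integral_sq_pos {φ : ℝ → ℝ} (hc : Continuous φ) (h0 : φ 0 ≠ 0) :
    0 < ∫ y in (-1:ℝ)..1, (φ y) ^ 2 := by
  have hc0 : ContinuousAt φ 0 := hc.continuousAt
  rw [Metric.continuousAt_iff] at hc0
  obtain ⟨δ, hδ0, hδ⟩ := hc0 (|φ 0|) (abs_pos.2 h0)
  set d := min (δ / 2) 1 with hd_def
  have hd0 : 0 < d := lt_min (by linarith) one_pos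
  have hd1 : d ≤ 1 := min_le_right _ _
  have hint : ∀ a b : ℝ, IntervalIntegrable (fun y => (φ y) ^ 2) volume a b := fun a b =>
    (hc.pow 2).intervalIntegrable _ _
  have hmid : 0 < ∫ y in (-d)..d, (φ y) ^ 2 := by
    apply intervalIntegral.intervalIntegral_pos_of_pos_on (hint _ _) _ (by linarith)
    intro x hx
    have hxd : dist x 0 < δ := by
      rw [Real.dist_eq, sub_zero]
      have h1 : |x| < d := abs_lt.2 ⟨hx.1, hx.2⟩
      calc |x| < d := h1
      _ ≤ δ / 2 := min_le_left _ _
      _ < δ := by linarith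
    have := hδ hxd
    have hφx : φ x ≠ 0 := by
      intro h
      rw [h] at this
      rw [Real.dist_eq, zero_sub, abs_neg] at this
      exact lt_irrefl _ this
    positivity
  have h1 : 0 ≤ ∫ y in (-1:ℝ)..(-d), (φ y) ^ 2 :=
    intervalIntegral.integral_nonneg (by linarith) (fun x _ => sq_nonneg _)
  have h3 : 0 ≤ ∫ y in d..(1:ℝ), (φ y) ^ 2 :=
    intervalIntegral.integral_nonneg (by linarith) (fun x _ => sq_nonneg _)
  have hsp1 : (∫ y in (-1:ℝ)..(-d), (φ y) ^ 2) + (∫ y in (-d)..d, (φ y) ^ 2)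
      = ∫ y in (-1:ℝ)..d, (φ y) ^ 2 :=
    intervalIntegral.integral_add_adjacent_intervals (hint _ _) (hint _ _)
  have hsp2 : (∫ y in (-1:ℝ)..d, (φ y) ^ 2) + (∫ y in d..(1:ℝ), (φ y) ^ 2)
      = ∫ y in (-1:ℝ)..1, (φ y) ^ 2 :=
    intervalIntegral.integral_add_adjacent_intervals (hint _ _) (hint _ _)
  linarith

lemma if_intervalIntegrable (c1 c2 : ℝ) (a b : ℝ) :
    IntervalIntegrable (fun y : ℝ => if 0 < y then c1 else c2) volume a b := by
  refine (intervalIntegrable_const (c := max |c1| |c2|)).mono_fun ?_ ?_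
  · exact ((measurable_const.ite measurableSet_Ioi measurable_const :
      Measurable fun y : ℝ => if 0 < y then c1 else c2)).aestronglyMeasurable
  · filter_upwards with x
    simp only [Real.norm_eq_abs]
    rw [abs_of_nonneg (le_trans (abs_nonneg c1) (le_max_left _ _))]
    by_cases h : 0 < x <;> simp [h, le_max_left, le_max_right]

lemma ite_mul_intervalIntegrable {h : ℝ → ℝ} (hc : Continuous h) (c1 c2 : ℝ) (a b : ℝ) :
    IntervalIntegrable (fun y : ℝ => (if 0 < y then c1 else c2) * h y) volume a b :=
  (if_intervalIntegrable c1 c2 a b).mul_continuousOn hc.continuousOn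


lemma E1_nonneg {μp μm ξ : ℝ} (hμp : 0 < μp) (hμm : 0 < μm) (ψ : ℝ → ℝ) :
    0 ≤ E1 μp μm ξ ψ := by
  unfold E1
  apply mul_nonneg (by norm_num)
  apply intervalIntegral.integral_nonneg (by norm_num)
  intro y _
  apply mul_nonneg
  · split <;> linarith
  · positivity

lemma psi0_sq_le {ρp ρm ξ : ℝ} (hρm : 0 < ρm) (hρ : ρm < ρp) (hξ : ξ ≠ 0)
    {ψ : ℝ → ℝ} (hC2 : ContDiff ℝ 2 ψ) (hm1 : ψ (-1) = 0) (hJ : Jfun ρp ρm ξ ψ = 1) :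
    ρm * min (ξ ^ 2) 1 * (ψ 0) ^ 2 ≤ 2 := by
  have hdiff : Differentiable ℝ ψ := hC2.differentiable (by norm_num)
  have hc : Continuous ψ := hC2.continuous
  have hc1 : Continuous (deriv ψ) := hC2.continuous_deriv (by norm_num)
  have hder : ∀ y, HasDerivAt (fun y => (ψ y) ^ 2) (2 * ψ y * deriv ψ y) y := by
    intro y
    have h := ((hdiff y).hasDerivAt).pow 2
    rw [show (2 * ψ y * deriv ψ y) = ((2:ℕ):ℝ) * ψ y ^ (2-1) * deriv ψ y by norm_num]
    exact h
  have hft : (∫ y in (-1:ℝ)..0, 2 * ψ y * deriv ψ y) = (ψ 0) ^ 2 - (ψ (-1)) ^ 2 :=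
    intervalIntegral.integral_eq_sub_of_hasDerivAt (fun x _ => hder x)
      (Continuous.intervalIntegrable (by fun_prop) _ _)
  rw [hm1] at hft
  have hft' : (∫ y in (-1:ℝ)..0, 2 * ψ y * deriv ψ y) = (ψ 0) ^ 2 := by
    rw [hft]; ring
  have hsum_int : ∀ a b : ℝ, IntervalIntegrable (fun y => (ψ y) ^ 2 + (deriv ψ y) ^ 2) volume a b :=
    fun a b => (Continuous.intervalIntegrable (by fun_prop) _ _)
  have hb1 : (ψ 0) ^ 2 ≤ ∫ y in (-1:ℝ)..0, ((ψ y) ^ 2 + (deriv ψ y) ^ 2) := by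
    rw [← hft']
    apply intervalIntegral.integral_mono_on (by norm_num)
      (Continuous.intervalIntegrable (by fun_prop) _ _) (hsum_int _ _)
    intro x _
    nlinarith [sq_nonneg (ψ x - deriv ψ x)]
  have hb2 : (∫ y in (-1:ℝ)..0, ((ψ y) ^ 2 + (deriv ψ y) ^ 2))
      ≤ ∫ y in (-1:ℝ)..1, ((ψ y) ^ 2 + (deriv ψ y) ^ 2) := by
    have hsp : (∫ y in (-1:ℝ)..0, ((ψ y) ^ 2 + (deriv ψ y) ^ 2))
        + (∫ y in (0:ℝ)..1, ((ψ y) ^ 2 + (deriv ψ y) ^ 2))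
        = ∫ y in (-1:ℝ)..1, ((ψ y) ^ 2 + (deriv ψ y) ^ 2) :=
      intervalIntegral.integral_add_adjacent_intervals (hsum_int _ _) (hsum_int _ _)
    have hnn : 0 ≤ ∫ y in (0:ℝ)..1, ((ψ y) ^ 2 + (deriv ψ y) ^ 2) :=
      intervalIntegral.integral_nonneg (by norm_num) (fun x _ => by positivity)
    linarith
  have hb3 : (ρm * min (ξ ^ 2) 1) * (∫ y in (-1:ℝ)..1, ((ψ y) ^ 2 + (deriv ψ y) ^ 2)) ≤ 2 := by
    have hmono : (∫ y in (-1:ℝ)..1, (ρm * min (ξ ^ 2) 1) * ((ψ y) ^ 2 + (deriv ψ y) ^ 2))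
        ≤ ∫ y in (-1:ℝ)..1, (if 0 < y then ρp else ρm) * (ξ ^ 2 * (ψ y) ^ 2 + (deriv ψ y) ^ 2) := by
      apply intervalIntegral.integral_mono_on (by norm_num)
        ((hsum_int _ _).const_mul _)
        (ite_mul_intervalIntegrable (by fun_prop) _ _ _ _)
      intro x _
      have hcoef : ρm ≤ (if 0 < x then ρp else ρm) := by split <;> linarith
      have hcoef0 : 0 ≤ (if 0 < x then ρp else ρm) := by split <;> linarith
      have h1 : min (ξ ^ 2) 1 * (ψ x) ^ 2 ≤ ξ ^ 2 * (ψ x) ^ 2 :=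
        mul_le_mul_of_nonneg_right (min_le_left _ _) (sq_nonneg _)
      have h2 : min (ξ ^ 2) 1 * (deriv ψ x) ^ 2 ≤ (deriv ψ x) ^ 2 := by
        nlinarith [min_le_right (ξ ^ 2) (1:ℝ), sq_nonneg (deriv ψ x)]
      have h3 : ρm * (min (ξ ^ 2) 1 * ((ψ x) ^ 2 + (deriv ψ x) ^ 2))
          ≤ ρm * (ξ ^ 2 * (ψ x) ^ 2 + (deriv ψ x) ^ 2) := by
        apply mul_le_mul_of_nonneg_left _ hρm.le
        nlinarith
      have h4 : ρm * (ξ ^ 2 * (ψ x) ^ 2 + (deriv ψ x) ^ 2)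
          ≤ (if 0 < x then ρp else ρm) * (ξ ^ 2 * (ψ x) ^ 2 + (deriv ψ x) ^ 2) := by
        apply mul_le_mul_of_nonneg_right hcoef
        positivity
      calc ρm * min (ξ ^ 2) 1 * ((ψ x) ^ 2 + (deriv ψ x) ^ 2)
          = ρm * (min (ξ ^ 2) 1 * ((ψ x) ^ 2 + (deriv ψ x) ^ 2)) := by ring
      _ ≤ ρm * (ξ ^ 2 * (ψ x) ^ 2 + (deriv ψ x) ^ 2) := h3
      _ ≤ _ := h4
    rw [intervalIntegral.integral_const_mul] at hmono
    have hJ2 : (∫ y in (-1:ℝ)..1, (if 0 < y then ρp else ρm) * (ξ ^ 2 * (ψ y) ^ 2 + (deriv ψ y) ^ 2)) = 2 := by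
      have := hJ
      unfold Jfun at this
      linarith
    linarith
  have hmpos : 0 < ρm * min (ξ ^ 2) 1 :=
    mul_pos hρm (lt_min (by positivity) one_pos)
  calc ρm * min (ξ ^ 2) 1 * (ψ 0) ^ 2
      ≤ ρm * min (ξ ^ 2) 1 * ∫ y in (-1:ℝ)..1, ((ψ y) ^ 2 + (deriv ψ y) ^ 2) := by
        apply mul_le_mul_of_nonneg_left (le_trans hb1 hb2) hmpos.le
  _ ≤ 2 := hb3

/-- if `|B| < |B|_c` and `|ξ| > |ξ|_{vc}^B` then `α(s) < 0` for all sufficiently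
small `s > 0`. -/
theorem alpha_neg_of_unstable_regime
    (ρp ρm μp μm g B Bc xivc : ℝ)
    (hρm : 0 < ρm) (hρ : ρm < ρp) (hμp : 0 < μp) (hμm : 0 < μm) (hg : 0 < g)
    (hB : B ≠ 0) (hBc : 0 < Bc) (hBcsq : Bc ^ 2 = sSup (BcSet g ρp ρm))
    (hBlt : |B| < Bc)
    (hxivc0 : 0 ≤ xivc) (hxivcsq : xivc ^ 2 = sInf (XivcSet g ρp ρm B))
    (ξ : ℝ) (hξ : ξ ≠ 0) (hξgt : xivc < |ξ|) :
    ∃ s₀ : ℝ, 0 < s₀ ∧ ∀ s : ℝ, 0 < s → s ≤ s₀ → alpha ρp ρm μp μm g B ξ s < 0 := by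
  have hΔ : 0 < ρp - ρm := by linarith
  have hξ2 : (0:ℝ) < ξ ^ 2 := by positivity
  -- Step 1 : B² * 2 < g(ρp - ρm)
  have hBc_le : Bc ^ 2 ≤ g * (ρp - ρm) / 2 := by
    rw [hBcsq]
    exact Real.sSup_le (bcset_le hg hρ) (by positivity)
  have hB2 : B ^ 2 * 2 < g * (ρp - ρm) := by
    have h1 : |B| ^ 2 < Bc ^ 2 := by
      apply pow_lt_pow_left₀ hBlt (abs_nonneg B)
      norm_num
    rw [sq_abs] at h1
    linarith
  -- Step 2 : XivcSet is nonempty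
  obtain ⟨φt, htC2, htm1, htp1, htd1, htd2, htpos⟩ := exists_good_test hg hρ hB2
  have hne : (XivcSet g ρp ρm B).Nonempty :=
    ⟨_, φt, htC2, htm1, htp1, htd1, htd2, htpos, rfl⟩
  -- Step 3 : get a test function with quotient < ξ²
  have hxi2 : sInf (XivcSet g ρp ρm B) < ξ ^ 2 := by
    rw [← hxivcsq]
    have h1 : xivc ^ 2 < |ξ| ^ 2 := by
      apply pow_lt_pow_left₀ hξgt hxivc0
      norm_num
    rwa [sq_abs] at h1
  obtain ⟨r, hrmem, hrlt⟩ := exists_lt_of_csInf_lt hne hxi2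
  obtain ⟨φ, hC2, hm1, hp1, hd1φ, hd2φ, hD, hr_eq⟩ := hrmem
  set P := ∫ y in (-1:ℝ)..1, (deriv φ y) ^ 2 with hP_def
  set Q := ∫ y in (-1:ℝ)..1, (deriv (deriv φ) y) ^ 2 with hQ_def
  set G := g * (ρp - ρm) with hG_def
  set D := G * (φ 0) ^ 2 - B ^ 2 * P with hD_def
  have hDpos : 0 < D := hD
  have hND : B ^ 2 * Q < ξ ^ 2 * D := by
    rw [hr_eq] at hrlt
    exact (div_lt_iff₀ hDpos).1 hrlt
  -- regularity facts
  have hdiff : Differentiable ℝ φ := hC2.differentiable (by norm_num)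
  have hcont : Continuous φ := hC2.continuous
  have hc1 : Continuous (deriv φ) := hC2.continuous_deriv (by norm_num)
  have hCd : ContDiff ℝ 1 (deriv φ) := by
    have h := (contDiff_succ_iff_deriv (n := 1)).1
      (by rw [show ((1:WithTop ℕ∞) + 1) = 2 from rfl]; exact hC2)
    exact h.2.2
  have hdiff2 : Differentiable ℝ (deriv φ) := hCd.differentiable one_ne_zero
  have hc2 : Continuous (deriv (deriv φ)) := hCd.continuous_deriv le_rfl
  have hQnn : 0 ≤ Q :=
    intervalIntegral.integral_nonneg (by norm_num) (fun x _ => sq_nonneg _)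
  have hPnn : 0 ≤ P :=
    intervalIntegral.integral_nonneg (by norm_num) (fun x _ => sq_nonneg _)
  -- E0 φ < 0
  have hE0split : (∫ y in (-1:ℝ)..1, B ^ 2 * ((deriv φ y) ^ 2 + (deriv (deriv φ) y) ^ 2 / ξ ^ 2))
      = B ^ 2 * P + (B ^ 2 / ξ ^ 2) * Q := by
    have heq : ∀ y : ℝ, B ^ 2 * ((deriv φ y) ^ 2 + (deriv (deriv φ) y) ^ 2 / ξ ^ 2)
        = B ^ 2 * (deriv φ y) ^ 2 + (B ^ 2 / ξ ^ 2) * (deriv (deriv φ) y) ^ 2 := fun y => by ring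
    simp_rw [heq]
    rw [intervalIntegral.integral_add
      ((Continuous.intervalIntegrable (by fun_prop) _ _))
      ((Continuous.intervalIntegrable (by fun_prop) _ _)),
      intervalIntegral.integral_const_mul, intervalIntegral.integral_const_mul]
  have hE0φ : E0 g ρp ρm B ξ φ < 0 := by
    unfold E0
    rw [hE0split, ← hG_def]
    have hq : (B ^ 2 / ξ ^ 2) * Q * ξ ^ 2 = B ^ 2 * Q := by field_simp
    have hX : (B ^ 2 / ξ ^ 2) * Q < D := by
      have h' : (B ^ 2 / ξ ^ 2) * Q * ξ ^ 2 < D * ξ ^ 2 := by rw [hq]; linarith [hND]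
      exact lt_of_mul_lt_mul_right h' hξ2.le
    rw [hD_def] at hX
    linarith
  -- Jfun φ > 0
  have hφ0_ne : φ 0 ≠ 0 := by
    intro h
    have h1 : 0 < G * (φ 0) ^ 2 - B ^ 2 * P := by rw [← hD_def]; exact hDpos
    rw [h] at h1
    have hGB : 0 ≤ B ^ 2 * P := mul_nonneg (sq_nonneg B) hPnn
    have h2 : G * (0:ℝ) ^ 2 - B ^ 2 * P = -(B ^ 2 * P) := by ring
    rw [h2] at h1
    linarith
  have hJφpos : 0 < Jfun ρp ρm ξ φ := by
    have hsq : 0 < ∫ y in (-1:ℝ)..1, (φ y) ^ 2 := integral_sq_pos hcont hφ0_ne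
    have hmono : (∫ y in (-1:ℝ)..1, (ρm * ξ ^ 2) * (φ y) ^ 2)
        ≤ ∫ y in (-1:ℝ)..1, (if 0 < y then ρp else ρm) * (ξ ^ 2 * (φ y) ^ 2 + (deriv φ y) ^ 2) := by
      apply intervalIntegral.integral_mono_on (by norm_num)
        (((hcont.pow 2).intervalIntegrable _ _).const_mul _)
        (ite_mul_intervalIntegrable (by fun_prop) _ _ _ _)
      intro x _
      have hcoef : ρm ≤ (if 0 < x then ρp else ρm) := by split <;> linarith
      have h4 : ρm * (ξ ^ 2 * (φ x) ^ 2 + (deriv φ x) ^ 2)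
          ≤ (if 0 < x then ρp else ρm) * (ξ ^ 2 * (φ x) ^ 2 + (deriv φ x) ^ 2) :=
        mul_le_mul_of_nonneg_right hcoef (by positivity)
      have h3 : ρm * (ξ ^ 2 * (φ x) ^ 2) ≤ ρm * (ξ ^ 2 * (φ x) ^ 2 + (deriv φ x) ^ 2) :=
        mul_le_mul_of_nonneg_left (by linarith [sq_nonneg (deriv φ x)]) hρm.le
      simp only [Pi.pow_apply]; linarith [h3, h4]
    rw [intervalIntegral.integral_const_mul] at hmono
    unfold Jfun
    linarith [mul_pos (mul_pos hρm hξ2) hsq, hmono]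
  -- normalization
  set c := Jfun ρp ρm ξ φ with hc_def
  set t := (Real.sqrt c)⁻¹ with ht_def
  have htpos : 0 < t := by
    rw [ht_def]
    exact inv_pos.2 (Real.sqrt_pos.2 hJφpos)
  have ht2c : t ^ 2 * c = 1 := by
    rw [ht_def, inv_pow, Real.sq_sqrt hJφpos.le]
    field_simp
  set ψ : ℝ → ℝ := fun y => t * φ y with hψ_def
  have hdψ : deriv ψ = fun y => t * deriv φ y := funext fun y => deriv_const_mul t (hdiff y)
  have hd2ψ : deriv (deriv ψ) = fun y => t * deriv (deriv φ) y := by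
    rw [hdψ]
    exact funext fun y => deriv_const_mul t (hdiff2 y)
  have hψC2 : ContDiff ℝ 2 ψ := contDiff_const.mul hC2
  have hψAdm : Adm ψ := by
    refine ⟨hψC2, ?_, ?_, ?_, ?_⟩
    · show t * φ (-1) = 0; rw [hm1, mul_zero]
    · show t * φ 1 = 0; rw [hp1, mul_zero]
    · rw [hdψ]; show t * deriv φ (-1) = 0; rw [hd1φ, mul_zero]
    · rw [hdψ]; show t * deriv φ 1 = 0; rw [hd2φ, mul_zero]
  have hJψ : Jfun ρp ρm ξ ψ = 1 := by
    unfold Jfun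
    rw [hdψ]
    have heq : ∀ y : ℝ, (if 0 < y then ρp else ρm) * (ξ ^ 2 * (t * φ y) ^ 2 + (t * deriv φ y) ^ 2)
        = t ^ 2 * ((if 0 < y then ρp else ρm) * (ξ ^ 2 * (φ y) ^ 2 + (deriv φ y) ^ 2)) :=
      fun y => by ring
    simp only [hψ_def, heq]
    rw [intervalIntegral.integral_const_mul]
    have : c = (1/2) * ∫ y in (-1:ℝ)..1, (if 0 < y then ρp else ρm) * (ξ ^ 2 * (φ y) ^ 2 + (deriv φ y) ^ 2) := by
      rw [hc_def]; rfl
    rw [this] at ht2c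
    linarith [ht2c]
  have hE0ψ : E0 g ρp ρm B ξ ψ = t ^ 2 * E0 g ρp ρm B ξ φ := by
    unfold E0
    rw [hd2ψ, hdψ]
    have heq : ∀ y : ℝ, B ^ 2 * ((t * deriv φ y) ^ 2 + (t * deriv (deriv φ) y) ^ 2 / ξ ^ 2)
        = t ^ 2 * (B ^ 2 * ((deriv φ y) ^ 2 + (deriv (deriv φ) y) ^ 2 / ξ ^ 2)) := fun y => by ring
    simp_rw [heq]
    rw [intervalIntegral.integral_const_mul]
    show (1/2) * (t ^ 2 * _) - (1/2) * (g * (ρp - ρm)) * (t * φ 0) ^ 2 = _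
    ring
  have hE1ψ : E1 μp μm ξ ψ = t ^ 2 * E1 μp μm ξ φ := by
    unfold E1
    rw [hd2ψ, hdψ]
    have heq : ∀ y : ℝ, (if 0 < y then μp else μm) *
        (4 * ξ ^ 2 * (t * deriv φ y) ^ 2 + (ξ ^ 2 * (t * φ y) + t * deriv (deriv φ) y) ^ 2)
        = t ^ 2 * ((if 0 < y then μp else μm) *
          (4 * ξ ^ 2 * (deriv φ y) ^ 2 + (ξ ^ 2 * φ y + deriv (deriv φ) y) ^ 2)) := fun y => by ring
    simp only [hψ_def, heq]
    rw [intervalIntegral.integral_const_mul]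
    ring
  have hE0ψneg : E0 g ρp ρm B ξ ψ < 0 := by
    rw [hE0ψ]
    exact mul_neg_of_pos_of_neg (by positivity) hE0φ
  have hE1ψnn : 0 ≤ E1 μp μm ξ ψ := E1_nonneg hμp hμm ψ
  -- conclusion
  set A := ξ ^ 2 * E0 g ρp ρm B ξ ψ with hA_def
  set C := E1 μp μm ξ ψ with hC_def
  have hAneg : A < 0 := mul_neg_of_pos_of_neg hξ2 hE0ψneg
  have hCnn : 0 ≤ C := hE1ψnn
  refine ⟨-A / (2 * (C + 1)), div_pos (neg_pos.2 hAneg) (by linarith), ?_⟩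
  intro s hs hs0
  -- the value of the energy at ψ
  have hval : A + s * C ∈ {r : ℝ | ∃ ψ' : ℝ → ℝ, Adm ψ' ∧ Jfun ρp ρm ξ ψ' = 1 ∧
      r = ξ ^ 2 * E0 g ρp ρm B ξ ψ' + s * E1 μp μm ξ ψ'} :=
    ⟨ψ, hψAdm, hJψ, by rw [hA_def, hC_def]⟩
  -- lower bound for the whole set
  have hBdd : BddBelow {r : ℝ | ∃ ψ' : ℝ → ℝ, Adm ψ' ∧ Jfun ρp ρm ξ ψ' = 1 ∧
      r = ξ ^ 2 * E0 g ρp ρm B ξ ψ' + s * E1 μp μm ξ ψ'} := by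
    set m := ρm * min (ξ ^ 2) 1 with hm_def
    have hmpos : 0 < m := mul_pos hρm (lt_min hξ2 one_pos)
    refine ⟨-(ξ ^ 2 * G / m), ?_⟩
    rintro r' ⟨ψ', ⟨hψ'C2, hψ'm1, -, -, -⟩, hψ'J, rfl⟩
    have h0 := psi0_sq_le hρm hρ hξ hψ'C2 hψ'm1 hψ'J
    have hE1' : 0 ≤ E1 μp μm ξ ψ' := E1_nonneg hμp hμm ψ'
    have hintnn : 0 ≤ ∫ y in (-1:ℝ)..1,
        B ^ 2 * ((deriv ψ' y) ^ 2 + (deriv (deriv ψ') y) ^ 2 / ξ ^ 2) := by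
      apply intervalIntegral.integral_nonneg (by norm_num)
      intro x _
      have h1 : 0 ≤ (deriv (deriv ψ') x) ^ 2 / ξ ^ 2 := div_nonneg (sq_nonneg _) (sq_nonneg _)
      have h2 : 0 ≤ (deriv ψ' x) ^ 2 + (deriv (deriv ψ') x) ^ 2 / ξ ^ 2 := by
        have := sq_nonneg (deriv ψ' x); linarith
      exact mul_nonneg (sq_nonneg B) h2
    have hE0ge : -((1/2) * G * (ψ' 0) ^ 2) ≤ E0 g ρp ρm B ξ ψ' := by
      unfold E0
      rw [← hG_def]
      linarith
    have hψ'0 : (ψ' 0) ^ 2 ≤ 2 / m := by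
      rw [le_div_iff₀ hmpos]
      calc (ψ' 0) ^ 2 * m = m * (ψ' 0) ^ 2 := by ring
      _ ≤ 2 := h0
    have hGnn : 0 ≤ G := by rw [hG_def]; positivity
    have hstep : -(ξ ^ 2 * G / m) ≤ ξ ^ 2 * E0 g ρp ρm B ξ ψ' := by
      have h2 : -((1/2) * G * (2 / m)) ≤ -((1/2) * G * (ψ' 0) ^ 2) := by
        apply neg_le_neg
        apply mul_le_mul_of_nonneg_left hψ'0 (by positivity)
      have h3 : -((1/2) * G * (2 / m)) ≤ E0 g ρp ρm B ξ ψ' := le_trans h2 hE0ge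
      have h4 := mul_le_mul_of_nonneg_left h3 hξ2.le
      calc -(ξ ^ 2 * G / m) = ξ ^ 2 * (-((1/2) * G * (2 / m))) := by ring
      _ ≤ ξ ^ 2 * E0 g ρp ρm B ξ ψ' := h4
    linarith [mul_nonneg hs.le hE1', hstep]
  clear_value A C
  have hlt : A + s * C < 0 := by
    have hsC : s * C ≤ (-A / (2 * (C + 1))) * C :=
      mul_le_mul_of_nonneg_right hs0 (by linarith)
    have h1 : (-A / (2 * (C + 1))) * C < -A := by
      rw [div_mul_eq_mul_div, div_lt_iff₀ (by linarith : (0:ℝ) < 2 * (C + 1))]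
      have hA' : 0 < -A := neg_pos.2 hAneg
      linarith [mul_pos hA' (by linarith : (0:ℝ) < C + 2)]
    linarith
  unfold alpha
  calc sInf {r : ℝ | ∃ ψ' : ℝ → ℝ, Adm ψ' ∧ Jfun ρp ρm ξ ψ' = 1 ∧
      r = ξ ^ 2 * E0 g ρp ρm B ξ ψ' + s * E1 μp μm ξ ψ'} ≤ A + s * C := csInf_le hBdd hval
  _ < 0 := hlt

end
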